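/- arXiv:2312.12709 — 6 statements merged into one kernel-verified Lean document; each statement's English description precedes it below -/
import Mathlib

section
/- Let φ: K → M be a strong covering of abstract simplicial complexes. Then for every i-face G of M and every i-face F in the preimage φ⁻¹(G), the map φ restricts to a bijection from the set of (i+1)-faces of K containing F (in their boundary) to the set of (i+1)-faces of M containing G (in their boundary). -/
open Finset

variable {V : Type*} {W : Type*}

/-- An abstract simplicial complex: a collection of finite subsets of `V`
closed under taking subsets. -/
def IsComplex [DecidableEq V] (K : Finset (Finset V)) : Prop :=
  ∀ F ∈ K, ∀ G, G ⊆ F → G ∈ K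

/-- The 1-skeleton graph of a complex. -/
def oneSkeleton [DecidableEq V] (K : Finset (Finset V)) : SimpleGraph V where
  Adj u v := u ≠ v ∧ ({u, v} : Finset V) ∈ K
  symm := ⟨fun u v h => ⟨h.1.symm, by rw [Finset.pair_comm]; exact h.2⟩⟩
  loopless := ⟨fun u h => h.1 rfl⟩

/-- A strong covering of simplicial complexes `φ : K → M`:
`K` is a connected complex, `φ` is simplicial, the preimage of each face of `M`
is a disjoint union of faces of `K` each mapped bijectively onto it, and
incidences lift: whenever `G ∈ ∂ Gb` in `M` and `F ∈ φ⁻¹(G)`, there is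
`Fb` of `K` with `F ∈ ∂ Fb` and `φ(Fb) = Gb`. -/
structure StrongCovering [DecidableEq V] [DecidableEq W]
    (K : Finset (Finset V)) (M : Finset (Finset W)) (φ : V → W) : Prop where
  complexK : IsComplex K
  complexM : IsComplex M
  nonemptyK : K.Nonempty
  connectedK : ∀ u v : V, {u} ∈ K → {v} ∈ K → (oneSkeleton K).Reachable u v
  simplicial : ∀ F ∈ K, F.image φ ∈ M
  injOn : ∀ F ∈ K, Set.InjOn φ (F : Set V)
  disjointFibers : ∀ F ∈ K, ∀ F' ∈ K, F.image φ = F'.image φ → F ≠ F' → Disjoint F F'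
  surjFaces : ∀ G ∈ M, ∃ F ∈ K, F.image φ = G
  strong : ∀ G ∈ M, ∀ Gb ∈ M, G ⊆ Gb → Gb.card = G.card + 1 →
    ∀ F ∈ K, F.image φ = G → ∃ Fb ∈ K, F ⊆ Fb ∧ Fb.card = F.card + 1 ∧ Fb.image φ = Gb

/-- for a strong covering `φ : K → M`, for every `i`-face `G` of `M`
and every `F ∈ φ⁻¹(G)`, the map `φ` restricts to a bijection from the set of
`(i+1)`-faces of `K` containing `F` in their boundary onto the set of
`(i+1)`-faces of `M` containing `G` in their boundary. -/
theorem strongCovering_bijOn_cofaces [DecidableEq V] [DecidableEq W]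
    (K : Finset (Finset V)) (M : Finset (Finset W)) (φ : V → W)
    (hc : StrongCovering K M φ) (i : ℕ)
    (G : Finset W) (hG : G ∈ M) (hGcard : G.card = i + 1)
    (F : Finset V) (hF : F ∈ K) (hFG : F.image φ = G) :
    Set.BijOn (fun Fb => Fb.image φ)
      {Fb : Finset V | Fb ∈ K ∧ F ⊆ Fb ∧ Fb.card = i + 2}
      {Gb : Finset W | Gb ∈ M ∧ G ⊆ Gb ∧ Gb.card = i + 2} := by
  have hFcard : F.card = i + 1 := by
    rw [← hGcard, ← hFG]
    exact (Finset.card_image_of_injOn (hc.injOn F hF)).symm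
  refine ⟨?_, ?_, ?_⟩
  · rintro Fb ⟨hFb, hsub, hcard⟩
    refine ⟨hc.simplicial Fb hFb, ?_, ?_⟩
    · rw [← hFG]; exact Finset.image_subset_image hsub
    · rw [Finset.card_image_of_injOn (hc.injOn Fb hFb), hcard]
  · rintro Fb ⟨hFb, hsub, hcard⟩ Fb' ⟨hFb', hsub', hcard'⟩ him
    by_contra hne
    have hdisj := hc.disjointFibers Fb hFb Fb' hFb' him hne
    have hFne : F.Nonempty := by
      rw [← Finset.card_pos, hFcard]; omega
    obtain ⟨x, hx⟩ := hFne
    exact (Finset.disjoint_left.mp hdisj (hsub hx)) (hsub' hx)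
  · rintro Gb ⟨hGb, hsubG, hGbcard⟩
    obtain ⟨Fb, hFb, hsub, hcard, him⟩ :=
      hc.strong G hG Gb hGb hsubG (by omega) F hF hFG
    exact ⟨Fb, ⟨hFb, hsub, by omega⟩, him⟩
end

section
/- Let φ: K → M be a strong covering of finite abstract simplicial complexes. Then there exists a positive integer k such that for every dimension i with 0 ≤ i ≤ dim K and every i-face G of M, the number of i-faces of K in φ⁻¹(G) equals k. -/
open Finset

variable {V : Type*} {W : Type*}

section Aux
variable [DecidableEq V] [DecidableEq W]
variable {K : Finset (Finset V)} {M : Finset (Finset W)} {φ : V → W}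

lemma fiber_step (hc : StrongCovering K M φ)
    {G Gb : Finset W} (hG : G ∈ M) (hGb : Gb ∈ M) (hsub : G ⊆ Gb)
    (hcard : Gb.card = G.card + 1) (hne : G.Nonempty) :
    (K.filter fun F => F.image φ = Gb).card
      = (K.filter fun F => F.image φ = G).card := by
  apply Finset.card_bij (fun F _ => F.filter fun v => φ v ∈ G)
  · intro F hF
    rw [Finset.mem_filter] at hF ⊢
    obtain ⟨hFK, hFim⟩ := hF
    refine ⟨hc.complexK F hFK _ (Finset.filter_subset _ _), ?_⟩
    apply Finset.Subset.antisymm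
    · intro g hg
      simp only [Finset.mem_image, Finset.mem_filter] at hg
      obtain ⟨v, ⟨_, hv⟩, rfl⟩ := hg
      exact hv
    · intro g hg
      have hgb : g ∈ Gb := hsub hg
      rw [← hFim] at hgb
      obtain ⟨v, hv, rfl⟩ := Finset.mem_image.mp hgb
      exact Finset.mem_image.mpr ⟨v, Finset.mem_filter.mpr ⟨hv, hg⟩, rfl⟩
  · intro F1 h1 F2 h2 heq
    rw [Finset.mem_filter] at h1 h2
    by_contra hne'
    have hdisj := hc.disjointFibers F1 h1.1 F2 h2.1 (h1.2.trans h2.2.symm) hne'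
    obtain ⟨g, hg⟩ := hne
    have hgb : g ∈ Gb := hsub hg
    rw [← h1.2] at hgb
    obtain ⟨v, hv, hφv⟩ := Finset.mem_image.mp hgb
    have hv1 : v ∈ F1.filter fun v => φ v ∈ G :=
      Finset.mem_filter.mpr ⟨hv, by rw [hφv]; exact hg⟩
    rw [heq] at hv1
    have hv2 : v ∈ F2 := (Finset.mem_filter.mp hv1).1
    exact Finset.disjoint_left.mp hdisj hv hv2
  · intro F' hF'
    rw [Finset.mem_filter] at hF'
    obtain ⟨hF'K, hF'im⟩ := hF'
    obtain ⟨Fb, hFbK, hsub', hcard', hFbim⟩ :=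
      hc.strong G hG Gb hGb hsub hcard F' hF'K hF'im
    refine ⟨Fb, Finset.mem_filter.mpr ⟨hFbK, hFbim⟩, ?_⟩
    -- show F' = Fb.filter …
    have hs1 : F' ⊆ Fb.filter fun v => φ v ∈ G := by
      intro v hv
      refine Finset.mem_filter.mpr ⟨hsub' hv, ?_⟩
      rw [← hF'im]
      exact Finset.mem_image_of_mem φ hv
    have himsub : (Fb.filter fun v => φ v ∈ G).image φ ⊆ G := by
      intro g hg
      simp only [Finset.mem_image, Finset.mem_filter] at hg
      obtain ⟨v, ⟨_, hv⟩, rfl⟩ := hg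
      exact hv
    have hinj : Set.InjOn φ ((Fb.filter fun v => φ v ∈ G) : Set V) :=
      (hc.injOn Fb hFbK).mono (by exact_mod_cast Finset.filter_subset _ _)
    have hc1 : (Fb.filter fun v => φ v ∈ G).card ≤ G.card := by
      rw [← Finset.card_image_of_injOn hinj]
      exact Finset.card_le_card himsub
    have hc2 : G.card = F'.card := by
      rw [← hF'im]; exact Finset.card_image_of_injOn (hc.injOn F' hF'K)
    exact (Finset.eq_of_subset_of_card_le hs1 (hc2 ▸ hc1)).symm

lemma fiber_vertex (hc : StrongCovering K M φ) :
    ∀ n (G : Finset W), G.card = n → G ∈ M → ∀ w ∈ G,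
    (K.filter fun F => F.image φ = G).card
      = (K.filter fun F => F.image φ = {w}).card := by
  intro n
  induction n with
  | zero =>
    intro G hGc _ w hw
    rw [Finset.card_eq_zero] at hGc
    simp [hGc] at hw
  | succ n ih =>
    intro G hGc hG w hw
    rcases Nat.eq_zero_or_pos n with hn | hn
    · subst hn
      have : G = {w} := Finset.eq_singleton_iff_unique_mem.mpr
        ⟨hw, fun x hx => by
          have := Finset.card_eq_one.mp hGc
          obtain ⟨a, rfl⟩ := this
          simp_all⟩
      rw [this]
    · obtain ⟨x, hx, hxw⟩ : ∃ x ∈ G, x ≠ w :=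
        Finset.exists_mem_ne (by omega) w
      set G' := G.erase x with hG'
      have hsub : G' ⊆ G := Finset.erase_subset _ _
      have hG'M : G' ∈ M := hc.complexM G hG G' hsub
      have hwG' : w ∈ G' := Finset.mem_erase.mpr ⟨fun h => hxw h.symm, hw⟩
      have hG'c : G'.card = n := by
        simp [hG', Finset.card_erase_of_mem hx, hGc]
      have hstep := fiber_step hc hG'M hG hsub (by omega) ⟨w, hwG'⟩
      rw [hstep]
      exact ih G' hG'c hG'M w hwG'

lemma vertex_const (hc : StrongCovering K M φ) {w w' : W}
    (hw : ({w} : Finset W) ∈ M) (hw' : ({w'} : Finset W) ∈ M) :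
    (K.filter fun F => F.image φ = {w}).card
      = (K.filter fun F => F.image φ = {w'}).card := by
  -- obtain vertices above w and w'
  have hlift : ∀ z : W, ({z} : Finset W) ∈ M →
      ∃ u : V, ({u} : Finset V) ∈ K ∧ φ u = z := by
    intro z hz
    obtain ⟨F, hFK, hFim⟩ := hc.surjFaces _ hz
    have hFne : F.Nonempty := by
      rcases F.eq_empty_or_nonempty with rfl | h
      · exact absurd hFim.symm (Finset.singleton_ne_empty z)
      · exact h
    obtain ⟨u, hu⟩ := hFne
    refine ⟨u, hc.complexK F hFK _ (Finset.singleton_subset_iff.mpr hu), ?_⟩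
    have : φ u ∈ ({z} : Finset W) := hFim ▸ Finset.mem_image_of_mem φ hu
    exact Finset.mem_singleton.mp this
  obtain ⟨u, huK, rfl⟩ := hlift w hw
  obtain ⟨u', hu'K, rfl⟩ := hlift w' hw'
  have hreach := hc.connectedK u u' huK hu'K
  obtain ⟨p⟩ := hreach
  clear hw hw' huK hu'K
  induction p with
  | nil => rfl
  | @cons a b c hab p ih =>
    have hpair : ({a, b} : Finset V) ∈ K := (show a ≠ b ∧ ({a, b} : Finset V) ∈ K from hab).2
    have hane : φ a ≠ φ b := by
      intro h
      exact (show a ≠ b ∧ ({a, b} : Finset V) ∈ K from hab).1 (hc.injOn _ hpair (by simp) (by simp) h)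
    have hpairM : ({φ a, φ b} : Finset W) ∈ M := by
      have := hc.simplicial _ hpair
      simpa using this
    have haM : ({φ a} : Finset W) ∈ M :=
      hc.complexM _ hpairM _ (by intro x hx; simp at hx; simp [hx])
    have hbM : ({φ b} : Finset W) ∈ M :=
      hc.complexM _ hpairM _ (by intro x hx; simp at hx; simp [hx])
    have hcard : ({φ a, φ b} : Finset W).card = 1 + 1 := by
      rw [Finset.card_pair hane]
    have h1 := fiber_step hc haM hpairM (by simp) (by simpa using hcard) ⟨φ a, by simp⟩
    have h2 := fiber_step hc hbM hpairM (by simp) (by simpa using hcard) ⟨φ b, by simp⟩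
    rw [← h1, h2]
    exact ih

end Aux

/-- a strong covering of finite simplicial complexes has a
well-defined degree: there is a positive integer `k` such that for every
dimension `i` with `i ≤ dim K` and every `i`-face `G` of `M`, the number of
`i`-faces of `K` in `φ⁻¹(G)` equals `k`. -/
theorem strongCovering_exists_degree [DecidableEq V] [DecidableEq W]
    (K : Finset (Finset V)) (M : Finset (Finset W)) (φ : V → W)
    (hc : StrongCovering K M φ) :
    ∃ k : ℕ, 0 < k ∧ ∀ i : ℕ, (∃ F ∈ K, i + 1 ≤ F.card) →
      ∀ G ∈ M, G.card = i + 1 →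
        (K.filter fun F => F.card = i + 1 ∧ F.image φ = G).card = k := by
  by_cases h : ∃ w : W, ({w} : Finset W) ∈ M
  · obtain ⟨w0, hw0⟩ := h
    refine ⟨(K.filter fun F => F.image φ = {w0}).card, ?_, ?_⟩
    · obtain ⟨F, hFK, hFim⟩ := hc.surjFaces _ hw0
      exact Finset.card_pos.mpr ⟨F, Finset.mem_filter.mpr ⟨hFK, hFim⟩⟩
    · intro i _ G hG hGcard
      have hne : G.Nonempty := Finset.card_pos.mp (by omega)
      obtain ⟨w, hw⟩ := hne
      have hwM : ({w} : Finset W) ∈ M :=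
        hc.complexM G hG _ (Finset.singleton_subset_iff.mpr hw)
      have h1 : (K.filter fun F => F.card = i + 1 ∧ F.image φ = G)
          = K.filter fun F => F.image φ = G := by
        apply Finset.filter_congr
        intro F hF
        constructor
        · rintro ⟨_, h⟩; exact h
        · intro himg
          refine ⟨?_, himg⟩
          have := Finset.card_image_of_injOn (hc.injOn F hF)
          rw [himg] at this
          omega
      rw [h1, fiber_vertex hc G.card G rfl hG w hw, vertex_const hc hwM hw0]
  · refine ⟨1, one_pos, ?_⟩
    intro i _ G hG hGcard
    exfalso
    have hne : G.Nonempty := Finset.card_pos.mp (by omega)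
    obtain ⟨w, hw⟩ := hne
    exact h ⟨w, hc.complexM G hG _ (Finset.singleton_subset_iff.mpr hw)⟩
end

section
/- Let φ: K → M be a strong covering of finite abstract simplicial complexes. Then the induced map on the i-th incidence graphs, sending each i-face and (i+1)-face of K to its image under φ, is a covering map of graphs from B_i(K) to B_i(M). -/
open Finset

variable {V : Type*} {W : Type*}

/-- The `i`-th incidence graph `B_i(K)` of a complex: a bipartite graph on the
`i`-faces and `(i+1)`-faces of `K`, with `{F, Fb}` an edge iff `F ∈ ∂ Fb`. -/
def incGraph [DecidableEq V] (K : Finset (Finset V)) (i : ℕ) : SimpleGraph (Finset V) where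
  Adj F G := F ∈ K ∧ G ∈ K ∧
    ((F ⊆ G ∧ F.card = i + 1 ∧ G.card = i + 2) ∨ (G ⊆ F ∧ G.card = i + 1 ∧ F.card = i + 2))
  symm := by
    constructor
    intro F G h
    exact ⟨h.2.1, h.1, h.2.2.elim Or.inr Or.inl⟩
  loopless := by
    constructor
    intro F h
    rcases h.2.2 with ⟨-, h1, h2⟩ | ⟨-, h1, h2⟩ <;> omega

/-- a strong covering `φ : K → M` induces a covering map of graphs
from the `i`-th incidence graph `B_i(K)` to `B_i(M)`: the induced map
`F ↦ φ(F)` is a graph homomorphism, it is surjective onto the vertices of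
`B_i(M)` (the `i`- and `(i+1)`-faces of `M`), and it restricts to a bijection
from the neighborhood of each vertex of `B_i(K)` onto the neighborhood of its
image. -/
theorem strongCovering_incGraph_covering [DecidableEq V] [DecidableEq W]
    (K : Finset (Finset V)) (M : Finset (Finset W)) (φ : V → W)
    (hc : StrongCovering K M φ) (i : ℕ) :
    (∀ F G : Finset V, (incGraph K i).Adj F G →
        (incGraph M i).Adj (F.image φ) (G.image φ)) ∧
    (∀ G ∈ M, G.card = i + 1 ∨ G.card = i + 2 →
        ∃ F ∈ K, F.image φ = G) ∧
    (∀ F ∈ K, F.card = i + 1 ∨ F.card = i + 2 →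
        Set.BijOn (fun X => X.image φ)
          ((incGraph K i).neighborSet F)
          ((incGraph M i).neighborSet (F.image φ))) := by
  obtain ⟨cK, cM, neK, connK, simp', inj', disj', surj', strong'⟩ := hc
  have hcard : ∀ F ∈ K, (F.image φ).card = F.card := fun F hF =>
    Finset.card_image_of_injOn (inj' F hF)
  have hom : ∀ F G : Finset V, (incGraph K i).Adj F G →
      (incGraph M i).Adj (F.image φ) (G.image φ) := by
    rintro F G ⟨hF, hG, h⟩
    refine ⟨simp' F hF, simp' G hG, ?_⟩
    rcases h with ⟨hsub, h1, h2⟩ | ⟨hsub, h1, h2⟩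
    · exact Or.inl ⟨Finset.image_subset_image hsub, by rw [hcard F hF]; exact h1,
        by rw [hcard G hG]; exact h2⟩
    · exact Or.inr ⟨Finset.image_subset_image hsub, by rw [hcard G hG]; exact h1,
        by rw [hcard F hF]; exact h2⟩
  refine ⟨hom, fun G hG _ => surj' G hG, ?_⟩
  intro F hF hcF
  refine ⟨fun X hX => hom F X hX, ?_, ?_⟩
  · -- InjOn
    intro X hX Y hY hXY
    have hX : (incGraph K i).Adj F X := hX
    have hY : (incGraph K i).Adj F Y := hY
    simp only at hXY
    rcases hcF with hc1 | hc2
    · -- F has card i+1, so X and Y are supersets of F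
      obtain ⟨hFsX, -, -⟩ := hX.2.2.resolve_right (fun h => by omega)
      obtain ⟨hFsY, -, -⟩ := hY.2.2.resolve_right (fun h => by omega)
      by_contra hne
      have hd := disj' X hX.2.1 Y hY.2.1 hXY hne
      obtain ⟨v, hv⟩ : F.Nonempty := Finset.card_pos.mp (by omega)
      exact Finset.disjoint_left.mp hd (hFsX hv) (hFsY hv)
    · -- F has card i+2, so X and Y are subsets of F
      obtain ⟨hXsF, -, -⟩ := hX.2.2.resolve_left (fun h => by omega)
      obtain ⟨hYsF, -, -⟩ := hY.2.2.resolve_left (fun h => by omega)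
      have key : ∀ A B : Finset V, A ⊆ F → B ⊆ F → A.image φ = B.image φ → A ⊆ B := by
        intro A B hAF hBF h v hv
        have : φ v ∈ B.image φ := h ▸ Finset.mem_image_of_mem φ hv
        obtain ⟨u, hu, he⟩ := Finset.mem_image.mp this
        exact (inj' F hF (hBF hu) (hAF hv) he) ▸ hu
      exact Finset.Subset.antisymm (key X Y hXsF hYsF hXY) (key Y X hYsF hXsF hXY.symm)
  · -- SurjOn
    intro G' hG'
    have hG' : (incGraph M i).Adj (F.image φ) G' := hG'
    rcases hcF with hc1 | hc2
    · -- F has card i+1 : lift using strong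
      have hcF' : (F.image φ).card = i + 1 := by rw [hcard F hF]; exact hc1
      obtain ⟨hsub, -, hcG'⟩ := hG'.2.2.resolve_right (fun h => by omega)
      obtain ⟨Fb, hFbK, hFsFb, hFbc, hFbimg⟩ :=
        strong' (F.image φ) (simp' F hF) G' hG'.2.1 hsub (by omega) F hF rfl
      exact ⟨Fb, ⟨hF, hFbK, Or.inl ⟨hFsFb, hc1, by omega⟩⟩, hFbimg⟩
    · -- F has card i+2 : take the preimage inside F
      have hcF' : (F.image φ).card = i + 2 := by rw [hcard F hF]; exact hc2
      obtain ⟨hsub, hcG', -⟩ := hG'.2.2.resolve_left (fun h => by omega)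
      set X := F.filter (fun v => φ v ∈ G') with hXdef
      have hXF : X ⊆ F := Finset.filter_subset _ _
      have hXK : X ∈ K := cK F hF X hXF
      have himg : X.image φ = G' := by
        apply Finset.ext
        intro w
        constructor
        · intro hw
          obtain ⟨v, hv, he⟩ := Finset.mem_image.mp hw
          obtain ⟨-, hvG⟩ := Finset.mem_filter.mp hv
          exact he ▸ hvG
        · intro hw
          obtain ⟨v, hv, he⟩ := Finset.mem_image.mp (hsub hw)
          exact Finset.mem_image.mpr ⟨v, Finset.mem_filter.mpr ⟨hv, he ▸ hw⟩, he⟩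
      have hXc : X.card = i + 1 := by
        have := Finset.card_image_of_injOn ((inj' F hF).mono (by exact_mod_cast hXF))
        rw [himg] at this
        omega
      exact ⟨X, ⟨hF, hXK, Or.inr ⟨hXF, hXc, hc2⟩⟩, himg⟩
end

section
/- Let W₁ be an n × n positive diagonal matrix, W₂ an m × m positive diagonal matrix, D an m × n real matrix, and P an orthogonal k × k permutation matrix construction as follows: suppose D^ψ := Σ_{g ∈ G} D^g ⊗ P^g where {D^g}_{g∈G} are m × n matrices with D = Σ_g D^g, G ≤ S_k, and P^g is the permutation matrix of g. Then the trivial-representation block of (W₁ ⊗ I_k)⁻¹ (D^ψ)ᵀ (W₂ ⊗ I_k) D^ψ, obtained by conjugating with I ⊗ T where T⁻¹P^gT = I₁ ⊕ ρ₂(g) ⊕ ⋯ ⊕ ρ_t(g) for all g, equals W₁⁻¹ Dᵀ W₂ D. -/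
open Matrix Kronecker

/-- The permutation matrix of `g ∈ S_k` (complex entries). -/
def permMat (k : ℕ) (g : Equiv.Perm (Fin k)) : Matrix (Fin k) (Fin k) ℂ :=
  fun i j => if i = g j then 1 else 0

theorem permMat_transpose (k : ℕ) (g : Equiv.Perm (Fin k)) :
    (permMat k g)ᵀ = permMat k g⁻¹ := by
  ext i j
  simp only [transpose_apply, permMat, Equiv.eq_symm_apply]
  simp [eq_comm, Equiv.Perm.inv_def, Equiv.eq_symm_apply]

theorem permMat_mul (k : ℕ) (g h : Equiv.Perm (Fin k)) :
    permMat k g * permMat k h = permMat k (g * h) := by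
  ext i j
  simp [permMat, mul_apply, Finset.sum_ite_eq, eq_comm]
  split_ifs <;> simp_all [Equiv.Perm.mul_apply]


/-- with `D^ψ = Σ_{g∈G} D^g ⊗ P^g` and `D = Σ_g D^g`, the
trivial-representation block of `(W₁ ⊗ I_k)⁻¹ (D^ψ)ᵀ (W₂ ⊗ I_k) D^ψ`, obtained
by conjugating with `I ⊗ T` where `T` simultaneously block-diagonalizes all
permutation matrices `P^g` with first block the `1×1` identity, equals the base
weighted Laplacian `W₁⁻¹ Dᵀ W₂ D`. -/
theorem trivial_block_of_derived_laplacian {m n k : ℕ} (hk : 0 < k)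
    (G : Subgroup (Equiv.Perm (Fin k))) [Fintype ↥G]
    (Dg : G → Matrix (Fin m) (Fin n) ℝ)
    (D : Matrix (Fin m) (Fin n) ℝ) (hD : D = ∑ g : G, Dg g)
    (w₁ : Fin n → ℝ) (w₂ : Fin m → ℝ)
    (hw₁ : ∀ i, 0 < w₁ i) (hw₂ : ∀ i, 0 < w₂ i)
    (T T' : Matrix (Fin k) (Fin k) ℂ) (hTT' : T * T' = 1) (hT'T : T' * T = 1)
    (hblock : ∀ g : G,
      (T' * permMat k g * T) ⟨0, hk⟩ ⟨0, hk⟩ = 1 ∧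
      ∀ x : Fin k, x ≠ ⟨0, hk⟩ →
        (T' * permMat k g * T) x ⟨0, hk⟩ = 0 ∧ (T' * permMat k g * T) ⟨0, hk⟩ x = 0) :
    ∀ a b : Fin n,
      (((1 : Matrix (Fin n) (Fin n) ℂ) ⊗ₖ T') *
        ((diagonal (fun i => (w₁ i : ℂ)) ⊗ₖ (1 : Matrix (Fin k) (Fin k) ℂ))⁻¹ *
          (∑ g : G, (Dg g).map Complex.ofReal ⊗ₖ permMat k g)ᵀ *
          (diagonal (fun i => (w₂ i : ℂ)) ⊗ₖ (1 : Matrix (Fin k) (Fin k) ℂ)) *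
          (∑ g : G, (Dg g).map Complex.ofReal ⊗ₖ permMat k g)) *
        ((1 : Matrix (Fin n) (Fin n) ℂ) ⊗ₖ T)) (a, ⟨0, hk⟩) (b, ⟨0, hk⟩)
      = ((((diagonal w₁)⁻¹ * Dᵀ * diagonal w₂ * D) a b : ℝ) : ℂ) := by
  intro a b
  set W₁ : Matrix (Fin n) (Fin n) ℂ := diagonal (fun i => (w₁ i : ℂ)) with hW₁
  set W₂ : Matrix (Fin m) (Fin m) ℂ := diagonal (fun i => (w₂ i : ℂ)) with hW₂
  set Dc : ↥G → Matrix (Fin m) (Fin n) ℂ := fun g => (Dg g).map Complex.ofReal with hDc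
  have hinv : (W₁ ⊗ₖ (1 : Matrix (Fin k) (Fin k) ℂ))⁻¹ = W₁⁻¹ ⊗ₖ 1 := by
    rw [Matrix.inv_kronecker, inv_one]
  have key : ((1 : Matrix (Fin n) (Fin n) ℂ) ⊗ₖ T') *
        ((W₁ ⊗ₖ (1 : Matrix (Fin k) (Fin k) ℂ))⁻¹ *
          (∑ g : G, Dc g ⊗ₖ permMat k g)ᵀ *
          (W₂ ⊗ₖ (1 : Matrix (Fin k) (Fin k) ℂ)) *
          (∑ g : G, Dc g ⊗ₖ permMat k g)) *
        ((1 : Matrix (Fin n) (Fin n) ℂ) ⊗ₖ T)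
      = ∑ g : G, ∑ h : G,
          (W₁⁻¹ * (Dc g)ᵀ * W₂ * Dc h) ⊗ₖ
            (T' * permMat k ((g⁻¹ * h : G) : Equiv.Perm (Fin k)) * T) := by
    rw [hinv, Matrix.transpose_sum]
    simp only [← Matrix.kroneckerMap_transpose]
    simp only [Matrix.mul_sum, Matrix.sum_mul, ← Matrix.mul_kronecker_mul,
      permMat_transpose, permMat_mul, Matrix.one_mul, Matrix.mul_one,
      Subgroup.coe_mul, InvMemClass.coe_inv]
    exact Finset.sum_comm
  rw [key]
  simp only [Matrix.sum_apply, Matrix.kroneckerMap_apply]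
  have h00 : ∀ g : G, (T' * permMat k (g : Equiv.Perm (Fin k)) * T) ⟨0, hk⟩ ⟨0, hk⟩ = 1 :=
    fun g => (hblock g).1
  have : ∀ g h : G,
      (W₁⁻¹ * (Dc g)ᵀ * W₂ * Dc h) a b *
        (T' * permMat k ((g⁻¹ * h : G) : Equiv.Perm (Fin k)) * T) ⟨0, hk⟩ ⟨0, hk⟩
      = (W₁⁻¹ * (Dc g)ᵀ * W₂ * Dc h) a b := by
    intro g h
    rw [h00 (g⁻¹ * h), mul_one]
  simp only [this]
  have hsum : ∑ g : G, ∑ h : G, (W₁⁻¹ * (Dc g)ᵀ * W₂ * Dc h) a b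
      = (W₁⁻¹ * (D.map Complex.ofReal)ᵀ * W₂ * D.map Complex.ofReal) a b := by
    have hDmap : D.map Complex.ofReal = ∑ g : G, Dc g := by
      ext i j
      simp [hD, hDc, Matrix.sum_apply, Matrix.map_apply]
    rw [hDmap, Matrix.transpose_sum]
    simp only [Matrix.mul_sum, Matrix.sum_mul, Matrix.sum_apply]
    exact Finset.sum_comm
  rw [hsum]
  -- final: map statement
  have hw₁' : ∀ i, w₁ i ≠ 0 := fun i => (hw₁ i).ne'
  have h1 : (diagonal w₁)⁻¹ = diagonal (fun i => (w₁ i)⁻¹) := by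
    apply Matrix.inv_eq_left_inv
    rw [Matrix.diagonal_mul_diagonal]
    convert Matrix.diagonal_one using 2
    exact funext fun i => inv_mul_cancel₀ (hw₁' i)
  have h2 : W₁⁻¹ = diagonal (fun i => ((w₁ i : ℂ))⁻¹) := by
    apply Matrix.inv_eq_left_inv
    rw [hW₁, Matrix.diagonal_mul_diagonal]
    convert Matrix.diagonal_one using 2
    exact funext fun i => inv_mul_cancel₀ (by exact_mod_cast hw₁' i)
  rw [h1, h2, hW₂]
  simp only [Matrix.mul_apply, Matrix.diagonal_apply, Matrix.transpose_apply,
    Matrix.map_apply, mul_ite, ite_mul, mul_zero, zero_mul, Finset.sum_ite_eq,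
    Finset.sum_ite_eq', Finset.mem_univ, if_true]
  push_cast
  ring_nf
end

section
/- Let D be an m × n real matrix written as D = D⁺ + D⁻ where D⁺, D⁻ have disjoint supports (no entry position is nonzero in both), let s ∈ {±1} assign sign +1 to entries of D⁺ and −1 to entries of D⁻, and set D^s = D⁺ − D⁻. Let W₁, W₂ be positive diagonal matrices of sizes n and m. Define the 2k-dimensional matrix L = (W₁ ⊗ I₂)⁻¹ (D^ψ)ᵀ (W₂ ⊗ I₂) D^ψ where D^ψ = D⁺ ⊗ I₂ + D⁻ ⊗ P and P = [[0,1],[1,0]]. Then the spectrum of L is the multiset union of the spectrum of W₁⁻¹ Dᵀ W₂ D and the spectrum of W₁⁻¹ (D^s)ᵀ W₂ D^s. -/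
open Matrix Kronecker Polynomial

section Aux

variable {N : Type*} [Fintype N] [DecidableEq N]

lemma my_charpoly_conj (U M : Matrix N N ℝ) (hU : IsUnit U.det) :
    (U * M * U⁻¹).charpoly = M.charpoly := by
  have h1 : U * U⁻¹ = 1 := mul_nonsing_inv U hU
  have hC : ((C : ℝ →+* ℝ[X]).mapMatrix U) * ((C : ℝ →+* ℝ[X]).mapMatrix U⁻¹) = 1 := by
    rw [← RingHom.map_mul, h1, RingHom.map_one]
  have hcm : charmatrix (U * M * U⁻¹) =
      ((C : ℝ →+* ℝ[X]).mapMatrix U) * charmatrix M * ((C : ℝ →+* ℝ[X]).mapMatrix U⁻¹) := by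
    unfold charmatrix
    rw [RingHom.map_mul, RingHom.map_mul]
    rw [mul_sub, sub_mul]
    congr 1
    · rw [((scalar_commute (X : ℝ[X]) (fun r => (Commute.all _ _))
        ((C : ℝ →+* ℝ[X]).mapMatrix U)).symm).eq]
      rw [mul_assoc, hC, mul_one]
  have hdet : ((C : ℝ →+* ℝ[X]).mapMatrix U).det * ((C : ℝ →+* ℝ[X]).mapMatrix U⁻¹).det = 1 := by
    rw [← det_mul, hC, det_one]
  rw [Matrix.charpoly, hcm, det_mul, det_mul, mul_right_comm, hdet, one_mul, Matrix.charpoly]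

lemma my_charmatrix_blockDiagonal (M : Fin 2 → Matrix N N ℝ) :
    charmatrix (blockDiagonal M) = blockDiagonal (fun k => charmatrix (M k)) := by
  ext ⟨i, k⟩ ⟨j, l⟩
  by_cases h : (⟨i, k⟩ : N × Fin 2) = ⟨j, l⟩
  · obtain ⟨hij, hkl⟩ := Prod.mk.injEq .. ▸ h
    subst hij; subst hkl
    simp [blockDiagonal_apply]
  · rw [charmatrix_apply_ne _ _ _ h]
    rcases eq_or_ne k l with hkl | hkl
    · subst hkl
      have hij : i ≠ j := fun hij => h (by rw [hij])
      simp [blockDiagonal_apply, charmatrix_apply_ne _ _ _ hij]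
    · simp [blockDiagonal_apply, hkl]

lemma my_charpoly_blockDiagonal (M : Fin 2 → Matrix N N ℝ) :
    (blockDiagonal M).charpoly = (M 0).charpoly * (M 1).charpoly := by
  rw [Matrix.charpoly, my_charmatrix_blockDiagonal, det_blockDiagonal, Fin.prod_univ_two]
  rfl

lemma key_charpoly (A B : Matrix N N ℝ) :
    (A ⊗ₖ (1 : Matrix (Fin 2) (Fin 2) ℝ) + B ⊗ₖ !![0, 1; 1, 0]).charpoly
      = (A + B).charpoly * (A - B).charpoly := by
  set T : Matrix (Fin 2) (Fin 2) ℝ := !![1, 1; 1, -1] with hT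
  set Q : Matrix (Fin 2) (Fin 2) ℝ := !![1, 0; 0, -1] with hQ
  have hdetT : T.det = -2 := by norm_num [hT, Matrix.det_fin_two_of]
  have hTunit : IsUnit T.det := by rw [hdetT]; norm_num
  set U : Matrix (N × Fin 2) (N × Fin 2) ℝ := (1 : Matrix N N ℝ) ⊗ₖ T with hU
  have hUdet : IsUnit U.det := by
    rw [hU, det_kronecker, det_one, one_pow, one_mul]
    exact hTunit.pow _
  have hUinv : U * U⁻¹ = 1 := mul_nonsing_inv U hUdet
  have hPT : !![(0:ℝ), 1; 1, 0] * T = T * Q := by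
    rw [hT, hQ]; norm_num [Matrix.mul_fin_two]
  have hconj : A ⊗ₖ (1 : Matrix (Fin 2) (Fin 2) ℝ) + B ⊗ₖ !![0, 1; 1, 0]
      = U * (A ⊗ₖ (1 : Matrix (Fin 2) (Fin 2) ℝ) + B ⊗ₖ Q) * U⁻¹ := by
    have hmul : (A ⊗ₖ (1 : Matrix (Fin 2) (Fin 2) ℝ) + B ⊗ₖ !![0, 1; 1, 0]) * U
        = U * (A ⊗ₖ (1 : Matrix (Fin 2) (Fin 2) ℝ) + B ⊗ₖ Q) := by
      rw [hU, add_mul, mul_add, ← mul_kronecker_mul, ← mul_kronecker_mul,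
        ← mul_kronecker_mul, ← mul_kronecker_mul, one_mul, mul_one, one_mul, mul_one,
        one_mul, mul_one, hPT]
    calc A ⊗ₖ (1 : Matrix (Fin 2) (Fin 2) ℝ) + B ⊗ₖ !![0, 1; 1, 0]
        = (A ⊗ₖ (1 : Matrix (Fin 2) (Fin 2) ℝ) + B ⊗ₖ !![0, 1; 1, 0]) * (U * U⁻¹) := by
          rw [hUinv, mul_one]
      _ = U * (A ⊗ₖ (1 : Matrix (Fin 2) (Fin 2) ℝ) + B ⊗ₖ Q) * U⁻¹ := by
          rw [← mul_assoc, hmul]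
  rw [hconj, my_charpoly_conj _ _ hUdet]
  have hbd : A ⊗ₖ (1 : Matrix (Fin 2) (Fin 2) ℝ) + B ⊗ₖ Q
      = blockDiagonal (fun k : Fin 2 => if k = 0 then A + B else A - B) := by
    rw [hQ]
    ext ⟨i, k⟩ ⟨j, l⟩
    fin_cases k <;> fin_cases l <;>
      simp [blockDiagonal_apply, one_apply] <;> ring
  rw [hbd, my_charpoly_blockDiagonal]
  norm_num

end Aux

/-- matrix form of the 2-fold covering spectral union theorem:
write `D = D⁺ + D⁻` with disjoint supports and `D^s = D⁺ − D⁻`, and let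
`D^ψ = D⁺ ⊗ I₂ + D⁻ ⊗ P` with `P = [[0,1],[1,0]]`. Then the spectrum of
`L = (W₁ ⊗ I₂)⁻¹ (D^ψ)ᵀ (W₂ ⊗ I₂) D^ψ` is the multiset union of the spectra of
`W₁⁻¹ Dᵀ W₂ D` and `W₁⁻¹ (D^s)ᵀ W₂ D^s` (expressed via characteristic
polynomials: the charpoly of `L` is the product of the two charpolys). -/
theorem twofold_spectral_union_matrix {m n : ℕ}
    (Dp Dm : Matrix (Fin m) (Fin n) ℝ)
    (hdisj : ∀ i j, Dp i j = 0 ∨ Dm i j = 0)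
    (D Ds : Matrix (Fin m) (Fin n) ℝ) (hD : D = Dp + Dm) (hDs : Ds = Dp - Dm)
    (w₁ : Fin n → ℝ) (w₂ : Fin m → ℝ)
    (hw₁ : ∀ i, 0 < w₁ i) (hw₂ : ∀ i, 0 < w₂ i) :
    ((diagonal w₁ ⊗ₖ (1 : Matrix (Fin 2) (Fin 2) ℝ))⁻¹ *
        (Dp ⊗ₖ (1 : Matrix (Fin 2) (Fin 2) ℝ) + Dm ⊗ₖ !![0, 1; 1, 0])ᵀ *
        (diagonal w₂ ⊗ₖ (1 : Matrix (Fin 2) (Fin 2) ℝ)) *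
        (Dp ⊗ₖ (1 : Matrix (Fin 2) (Fin 2) ℝ) + Dm ⊗ₖ !![0, 1; 1, 0])).charpoly
      = ((diagonal w₁)⁻¹ * Dᵀ * diagonal w₂ * D).charpoly *
        ((diagonal w₁)⁻¹ * Dsᵀ * diagonal w₂ * Ds).charpoly := by
  set W : Matrix (Fin n) (Fin n) ℝ := (diagonal w₁)⁻¹ with hW
  set V : Matrix (Fin m) (Fin m) ℝ := diagonal w₂ with hV
  have hPt : (!![(0:ℝ), 1; 1, 0])ᵀ = !![0, 1; 1, 0] := by
    ext i j; fin_cases i <;> fin_cases j <;> simp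
  have hinv : (diagonal w₁ ⊗ₖ (1 : Matrix (Fin 2) (Fin 2) ℝ))⁻¹
      = W ⊗ₖ (1 : Matrix (Fin 2) (Fin 2) ℝ) := by
    rw [inv_kronecker, inv_one, hW]
  have hPP : (!![(0:ℝ), 1; 1, 0]) * !![0, 1; 1, 0] = 1 := by
    rw [Matrix.one_fin_two]
    norm_num [Matrix.mul_fin_two]
  have hLHS : (diagonal w₁ ⊗ₖ (1 : Matrix (Fin 2) (Fin 2) ℝ))⁻¹ *
        (Dp ⊗ₖ (1 : Matrix (Fin 2) (Fin 2) ℝ) + Dm ⊗ₖ !![0, 1; 1, 0])ᵀ *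
        (diagonal w₂ ⊗ₖ (1 : Matrix (Fin 2) (Fin 2) ℝ)) *
        (Dp ⊗ₖ (1 : Matrix (Fin 2) (Fin 2) ℝ) + Dm ⊗ₖ !![0, 1; 1, 0])
      = (W * Dpᵀ * V * Dp + W * Dmᵀ * V * Dm) ⊗ₖ (1 : Matrix (Fin 2) (Fin 2) ℝ)
        + (W * Dpᵀ * V * Dm + W * Dmᵀ * V * Dp) ⊗ₖ !![0, 1; 1, 0] := by
    rw [hinv, transpose_add, ← kroneckerMap_transpose, ← kroneckerMap_transpose,
      transpose_one, hPt]
    simp only [Matrix.mul_add, Matrix.add_mul, ← mul_kronecker_mul]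
    simp only [one_mul, mul_one]
    rw [hPP, ← hV, add_kronecker, add_kronecker]
    abel
  rw [hLHS, key_charpoly]
  have e1 : W * Dpᵀ * V * Dp + W * Dmᵀ * V * Dm + (W * Dpᵀ * V * Dm + W * Dmᵀ * V * Dp)
      = W * Dᵀ * V * D := by
    rw [hD, transpose_add]
    simp only [Matrix.mul_add, Matrix.add_mul]
    abel
  have e2 : W * Dpᵀ * V * Dp + W * Dmᵀ * V * Dm - (W * Dpᵀ * V * Dm + W * Dmᵀ * V * Dp)
      = W * Dsᵀ * V * Ds := by
    rw [hDs, transpose_sub]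
    simp only [Matrix.mul_sub, Matrix.sub_mul, Matrix.mul_add, Matrix.add_mul]
    abel
  rw [e1, e2]
end

section
/- Let φ: K → M be a strong k-fold covering of finite simplicial complexes with weight functions satisfying w_K(F) = w_M(φ(F)) for all faces F of K. Then every eigenvalue of the i-up Laplace operator L_i^up(M) of M is an eigenvalue of the i-up Laplace operator L_i^up(K) of K, with at least the same multiplicity (Spec L_i^up(M) ⊆ Spec L_i^up(K) as multisets, up to inclusion). -/
open Finset

variable {V : Type*} {W : Type*}

/-- The canonical boundary sign `sgn([F], ∂[Fb])` with respect to the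
orientations induced by the linear order on the vertices: it is `(−1)^j` if `F`
is obtained from `Fb` by deleting its `j`-th smallest vertex, and `0` if
`F ∉ ∂ Fb`. -/
def sgnBd [LinearOrder V] (F Fb : Finset V) : ℝ :=
  if F ⊆ Fb ∧ Fb.card = F.card + 1 then
    (-1 : ℝ) ^ (∑ v ∈ Fb \ F, (F.filter (· < v)).card)
  else 0

/-- The matrix of the `i`-up Laplace operator
`L_i^up = W_i⁻¹ D_iᵀ W_{i+1} D_i` of a weighted complex `K`, with rows and
columns indexed by the `i`-faces of `K`. -/
noncomputable def lapUp [Fintype V] [LinearOrder V]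
    (K : Finset (Finset V)) (w : Finset V → ℝ) (i : ℕ) :
    Matrix {F : Finset V // F ∈ K ∧ F.card = i + 1}
      {F : Finset V // F ∈ K ∧ F.card = i + 1} ℝ :=
  fun F F' => (w F.1)⁻¹ *
    ∑ Fb : {B : Finset V // B ∈ K ∧ B.card = i + 2},
      w Fb.1 * sgnBd F.1 Fb.1 * sgnBd F'.1 Fb.1

/-- The matrix of the `i`-up Laplace operator of an incidence-signed complex
`(K, s)`: `L_i^up(K,s) = W_i⁻¹ (D_i^s)ᵀ W_{i+1} D_i^s` where
`(D_i^s)_{Fb,F} = sgn([F], ∂[Fb]) s(F, Fb)`. -/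
noncomputable def lapUpSigned [Fintype V] [LinearOrder V]
    (K : Finset (Finset V)) (w : Finset V → ℝ)
    (s : Finset V → Finset V → ℝ) (i : ℕ) :
    Matrix {F : Finset V // F ∈ K ∧ F.card = i + 1}
      {F : Finset V // F ∈ K ∧ F.card = i + 1} ℝ :=
  fun F F' => (w F.1)⁻¹ *
    ∑ Fb : {B : Finset V // B ∈ K ∧ B.card = i + 2},
      w Fb.1 * (sgnBd F.1 Fb.1 * s F.1 Fb.1) * (sgnBd F'.1 Fb.1 * s F'.1 Fb.1)

/-- The matrix of the `i`-down Laplace operator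
`L_i^down = D_{i-1} W_{i-1}⁻¹ D_{i-1}ᵀ W_i` of a weighted complex `K`
(the `(i-1)`-faces have cardinality `i`; for `i = 0` this is the empty
simplex, giving the augmented/reduced version). -/
noncomputable def lapDown [Fintype V] [LinearOrder V]
    (K : Finset (Finset V)) (w : Finset V → ℝ) (i : ℕ) :
    Matrix {F : Finset V // F ∈ K ∧ F.card = i + 1}
      {F : Finset V // F ∈ K ∧ F.card = i + 1} ℝ :=
  fun F F' =>
    (∑ H : {H : Finset V // H ∈ K ∧ H.card = i},
      sgnBd H.1 F.1 * (w H.1)⁻¹ * sgnBd H.1 F'.1) * w F'.1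

/-- The sign `sgn([F], [φ(F)])` comparing the canonical orientation of a face
`F` with the orientation its image `φ(F)` inherits from `φ`: it is the sign of
the permutation sorting the `φ`-image of the sorted vertex list of `F`,
computed as the parity of the number of inversions. -/
def sgnMap {W : Type*} [LinearOrder V] [LinearOrder W] (φ : V → W) (F : Finset V) : ℝ :=
  (-1 : ℝ) ^ ((F ×ˢ F).filter fun p => p.1 < p.2 ∧ φ p.2 < φ p.1).card


section Aux

open Matrix LinearMap

lemma charpoly_dvd_of_intertwine {m n : Type*} [Fintype m] [DecidableEq m]
    [Fintype n] [DecidableEq n] (A : Matrix n n ℝ) (B : Matrix m m ℝ)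
    (T : Matrix n m ℝ) (hinj : Function.Injective (Matrix.toLin' T))
    (hAT : A * T = T * B) : B.charpoly ∣ A.charpoly := by
  classical
  set t := Matrix.toLin' T with ht
  obtain ⟨p, hp⟩ := Submodule.exists_isCompl (LinearMap.range t)
  let e₁ : (m → ℝ) ≃ₗ[ℝ] LinearMap.range t := LinearEquiv.ofInjective t hinj
  let b₁ : Module.Basis m ℝ (LinearMap.range t) := (Pi.basisFun ℝ m).map e₁
  let b₂ : Module.Basis (Fin (Module.finrank ℝ p)) ℝ p := Module.finBasis ℝ p
  let b : Module.Basis (m ⊕ Fin (Module.finrank ℝ p)) ℝ (n → ℝ) :=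
    (b₁.prod b₂).map (Submodule.prodEquivOfIsCompl _ _ hp)
  have hbinl : ∀ j, b (Sum.inl j) = t (Pi.basisFun ℝ m j) := by
    intro j
    simp [b, b₁, Module.Basis.prod_apply, Submodule.coe_prodEquivOfIsCompl, e₁,
      LinearEquiv.ofInjective_apply]
  have hty : ∀ y : m → ℝ, t y = ∑ j, y j • b (Sum.inl j) := by
    intro y
    have : y = ∑ j, y j • Pi.basisFun ℝ m j := by
      simpa using ((Pi.basisFun ℝ m).sum_repr y).symm
    conv_lhs => rw [this]
    rw [map_sum]
    simp [hbinl]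
  have hrepr : ∀ (y : m → ℝ) (z), b.repr (t y) z =
      Sum.elim y (fun _ => (0:ℝ)) z := by
    intro y z
    rw [hty y, map_sum]
    simp only [_root_.map_smul, Module.Basis.repr_self]
    rcases z with j | l
    · simp [Finsupp.single_apply]
    · simp [Finsupp.single_apply]
  set Mt := LinearMap.toMatrix b b (Matrix.toLin' A) with hMt
  have hcol : ∀ (j : m) (z), Mt z (Sum.inl j) =
      Sum.elim (fun j' => B j' j) (fun _ => (0:ℝ)) z := by
    intro j z
    have h1 : Matrix.toLin' A (b (Sum.inl j)) = t (Matrix.toLin' B (Pi.basisFun ℝ m j)) := by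
      rw [hbinl, ht, ← Matrix.toLin'_mul_apply, hAT, Matrix.toLin'_mul_apply]
    rw [hMt, LinearMap.toMatrix_apply, h1, hrepr]
    have : Matrix.toLin' B (Pi.basisFun ℝ m j) = fun j' => B j' j := by
      ext j'
      simp [Matrix.toLin'_apply, Matrix.mulVec_single, Pi.basisFun_apply]
    rw [this]
  have h11 : Mt.toBlocks₁₁ = B := by
    ext j' j; simpa [Matrix.toBlocks₁₁] using hcol j (Sum.inl j')
  have h21 : Mt.toBlocks₂₁ = 0 := by
    ext l j; simpa [Matrix.toBlocks₂₁] using hcol j (Sum.inr l)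
  have hblock : Mt = Matrix.fromBlocks B (Mt.toBlocks₁₂) 0 (Mt.toBlocks₂₂) := by
    rw [← h11, ← h21]; exact (Matrix.fromBlocks_toBlocks Mt).symm
  have hA : A.charpoly = Mt.charpoly := by
    have h1 : A = LinearMap.toMatrix (Pi.basisFun ℝ n) (Pi.basisFun ℝ n) (Matrix.toLin' A) := by
      rw [LinearMap.toMatrix_eq_toMatrix', LinearMap.toMatrix'_toLin']
    calc A.charpoly
        = (LinearMap.toMatrix (Pi.basisFun ℝ n) (Pi.basisFun ℝ n)
            (Matrix.toLin' A)).charpoly := by rw [← h1]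
      _ = (Matrix.toLin' A).charpoly := LinearMap.charpoly_toMatrix _ _
      _ = Mt.charpoly := (LinearMap.charpoly_toMatrix _ _).symm
  rw [hA, hblock, Matrix.charpoly_fromBlocks_zero₂₁]
  exact Dvd.intro _ rfl

lemma neg_one_pow_eq_of_even_add {a b : ℕ} (h : Even (a + b)) :
    ((-1 : ℝ)) ^ a = (-1) ^ b := by
  have hb : ((-1 : ℝ)) ^ b * (-1) ^ b = 1 := by
    rw [← pow_add]; exact Even.neg_one_pow ⟨b, rfl⟩
  calc ((-1:ℝ))^a = (-1)^a * ((-1)^b * (-1)^b) := by rw [hb, mul_one]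
    _ = ((-1)^(a+b)) * (-1)^b := by rw [← mul_assoc, ← pow_add]
    _ = (-1)^b := by rw [Even.neg_one_pow h, one_mul]

lemma sgnMap_mul_self {V W : Type*} [LinearOrder V] [LinearOrder W] (φ : V → W)
    (F : Finset V) : sgnMap φ F * sgnMap φ F = 1 := by
  rw [sgnMap, ← pow_add]
  exact Even.neg_one_pow ⟨_, rfl⟩

lemma sgnMap_ne_zero {V W : Type*} [LinearOrder V] [LinearOrder W] (φ : V → W)
    (F : Finset V) : sgnMap φ F ≠ 0 := by
  rw [sgnMap]
  exact pow_ne_zero _ (by norm_num)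

lemma sgnBd_image {V W : Type*} [LinearOrder V] [LinearOrder W] (φ : V → W)
    (F Fb : Finset V) (hsub : F ⊆ Fb) (hcard : Fb.card = F.card + 1)
    (hinj : Set.InjOn φ (Fb : Set V)) :
    sgnBd (F.image φ) (Fb.image φ) = sgnBd F Fb * (sgnMap φ F * sgnMap φ Fb) := by
  classical
  have hsd : (Fb \ F).card = 1 := by
    rw [card_sdiff_of_subset hsub, hcard]; omega
  obtain ⟨v, hv⟩ := Finset.card_eq_one.mp hsd
  have hvmem : v ∈ Fb ∧ v ∉ F := by
    have : v ∈ Fb \ F := by rw [hv]; exact mem_singleton_self v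
    exact ⟨(mem_sdiff.mp this).1, (mem_sdiff.mp this).2⟩
  have hFb : Fb = insert v F := by
    rw [Finset.insert_eq, union_comm, ← hv, Finset.union_sdiff_of_subset hsub]
  have hφv : φ v ∉ F.image φ := by
    intro h
    obtain ⟨u, hu, hue⟩ := Finset.mem_image.mp h
    exact hvmem.2 (hinj (hsub hu) hvmem.1 hue ▸ hu)
  have hGb : Fb.image φ = insert (φ v) (F.image φ) := by rw [hFb, Finset.image_insert]
  have hinjF : Set.InjOn φ (F : Set V) := hinj.mono (by exact_mod_cast hsub)
  have hGcard : (F.image φ).card = F.card := Finset.card_image_of_injOn hinjF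
  have hGbcard : (Fb.image φ).card = (F.image φ).card + 1 := by
    rw [Finset.card_image_of_injOn hinj, hcard, hGcard]
  have hGsub : F.image φ ⊆ Fb.image φ := Finset.image_subset_image hsub
  have hGsd : Fb.image φ \ F.image φ = {φ v} := by
    rw [hGb, Finset.insert_sdiff_cancel hφv]
  have hne : ∀ u ∈ F, u ≠ v ∧ φ u ≠ φ v := by
    intro u hu
    refine ⟨fun h => hvmem.2 (h ▸ hu), fun h => hvmem.2 ((hinj (hsub hu) hvmem.1 h) ▸ hu)⟩
  have hj : (F.filter (· < v)).card =
      (F.filter (fun u => u < v ∧ φ u < φ v)).card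
        + (F.filter (fun u => u < v ∧ φ v < φ u)).card := by
    simp only [card_filter]
    rw [← Finset.sum_add_distrib]
    apply Finset.sum_congr rfl
    intro u hu
    rcases lt_trichotomy (φ u) (φ v) with h | h | h
    · by_cases huv : u < v <;> simp [huv, h, h.asymm]
    · exact absurd h (hne u hu).2
    · by_cases huv : u < v <;> simp [huv, h, h.asymm]
  have hjm : ((F.image φ).filter (· < φ v)).card =
      (F.filter (fun u => u < v ∧ φ u < φ v)).card
        + (F.filter (fun u => v < u ∧ φ u < φ v)).card := by
    rw [Finset.filter_image, Finset.card_image_of_injOn (hinjF.mono (by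
      intro x hx; exact_mod_cast (Finset.filter_subset _ F) hx))]
    simp only [card_filter]
    rw [← Finset.sum_add_distrib]
    apply Finset.sum_congr rfl
    intro u hu
    rcases lt_trichotomy u v with h | h | h
    · by_cases hφ : φ u < φ v <;> simp [hφ, h, h.asymm]
    · exact absurd h (hne u hu).1
    · by_cases hφ : φ u < φ v <;> simp [hφ, h, h.asymm]
  have hinvFb : ((Fb ×ˢ Fb).filter fun p => p.1 < p.2 ∧ φ p.2 < φ p.1).card
      = ((F ×ˢ F).filter fun p => p.1 < p.2 ∧ φ p.2 < φ p.1).card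
        + (F.filter (fun u => u < v ∧ φ v < φ u)).card
        + (F.filter (fun u => v < u ∧ φ u < φ v)).card := by
    rw [hFb, card_filter, Finset.sum_product, Finset.sum_insert hvmem.2]
    have h1 : ∑ b ∈ insert v F, (if v < b ∧ φ b < φ v then 1 else 0)
        = (F.filter (fun u => v < u ∧ φ u < φ v)).card := by
      rw [Finset.sum_insert hvmem.2]
      simp only [lt_irrefl, false_and, if_false, zero_add]
      rw [card_filter]
    have h2 : ∀ a ∈ F, (∑ b ∈ insert v F, if a < b ∧ φ b < φ a then 1 else 0)
        = (if a < v ∧ φ v < φ a then 1 else 0)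
          + ∑ b ∈ F, (if a < b ∧ φ b < φ a then 1 else 0) := by
      intro a _
      rw [Finset.sum_insert hvmem.2]
    rw [h1, Finset.sum_congr rfl h2, Finset.sum_add_distrib]
    have h3 : ∑ a ∈ F, (if a < v ∧ φ v < φ a then 1 else 0)
        = (F.filter (fun u => u < v ∧ φ v < φ u)).card := by
      rw [card_filter]
    have h4 : ∑ a ∈ F, ∑ b ∈ F, (if a < b ∧ φ b < φ a then 1 else 0)
        = ((F ×ˢ F).filter fun p => p.1 < p.2 ∧ φ p.2 < φ p.1).card := by
      rw [card_filter, Finset.sum_product]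
    rw [h3, h4]; ring
  rw [sgnBd, sgnBd, if_pos ⟨hGsub, hGbcard⟩, if_pos ⟨hsub, hcard⟩, hGsd, hv,
    Finset.sum_singleton, Finset.sum_singleton, sgnMap, sgnMap, hinvFb, hj, hjm,
    ← pow_add, ← pow_add]
  apply neg_one_pow_eq_of_even_add
  refine ⟨(F.filter (fun u => u < v ∧ φ u < φ v)).card
    + (F.filter (fun u => v < u ∧ φ u < φ v)).card
    + (F.filter (fun u => u < v ∧ φ v < φ u)).card
    + ((F ×ˢ F).filter fun p => p.1 < p.2 ∧ φ p.2 < φ p.1).card, by ring⟩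

lemma inner_sum_cov {V W : Type*} [Fintype V] [LinearOrder V] [LinearOrder W]
    {K : Finset (Finset V)} {M : Finset (Finset W)} {φ : V → W}
    (hc : StrongCovering K M φ) (i : ℕ)
    (Fb : Finset V) (hFbK : Fb ∈ K) (hFbc : Fb.card = i + 2)
    (G : Finset W) (hGc : G.card = i + 1) :
    ∑ F' : {F : Finset V // F ∈ K ∧ F.card = i + 1},
      (if F'.1.image φ = G then sgnBd F'.1 Fb * sgnMap φ F'.1 else 0)
      = sgnMap φ Fb * sgnBd G (Fb.image φ) := by
  classical
  by_cases hG : G ⊆ Fb.image φ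
  · set F0 : Finset V := Fb.filter (fun u => φ u ∈ G) with hF0
    have hF0sub : F0 ⊆ Fb := filter_subset _ _
    have himg : F0.image φ = G := by
      apply Finset.Subset.antisymm
      · intro w hw
        obtain ⟨u, hu, rfl⟩ := mem_image.mp hw
        exact (mem_filter.mp hu).2
      · intro g hg
        obtain ⟨u, hu, rfl⟩ := mem_image.mp (hG hg)
        exact mem_image.mpr ⟨u, mem_filter.mpr ⟨hu, hg⟩, rfl⟩
    have hF0K : F0 ∈ K := hc.complexK Fb hFbK F0 hF0sub
    have hF0c : F0.card = i + 1 := by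
      have h := Finset.card_image_of_injOn ((hc.injOn Fb hFbK).mono
        (by exact_mod_cast hF0sub))
      rw [himg, hGc] at h
      omega
    have huniq : ∀ F' : Finset V, F' ⊆ Fb → F'.image φ = G → F' = F0 := by
      intro F' hsub himg'
      have hsub0 : F' ⊆ F0 := by
        intro u hu
        exact mem_filter.mpr ⟨hsub hu, himg' ▸ mem_image_of_mem φ hu⟩
      apply Finset.eq_of_subset_of_card_le hsub0
      have h1 : (F'.image φ).card = F'.card := Finset.card_image_of_injOn
        ((hc.injOn Fb hFbK).mono (by exact_mod_cast hsub))
      rw [himg', hGc] at h1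
      omega
    rw [Fintype.sum_eq_single (⟨F0, hF0K, hF0c⟩ :
        {F : Finset V // F ∈ K ∧ F.card = i + 1})]
    · rw [if_pos himg]
      have hs := sgnBd_image φ F0 Fb hF0sub (by omega) (hc.injOn Fb hFbK)
      show sgnBd F0 Fb * sgnMap φ F0 = sgnMap φ Fb * sgnBd G (Fb.image φ)
      rw [← himg, hs]
      have h2 := sgnMap_mul_self φ Fb
      linear_combination (-(sgnBd F0 Fb * sgnMap φ F0)) * h2
    · intro F' hne
      by_cases himg' : F'.1.image φ = G
      · rw [if_pos himg']
        have : ¬ (F'.1 ⊆ Fb ∧ Fb.card = F'.1.card + 1) := by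
          rintro ⟨hsub', _⟩
          exact hne (Subtype.ext (huniq F'.1 hsub' himg'))
        rw [sgnBd, if_neg this, zero_mul]
      · rw [if_neg himg']
  · have hrhs : sgnBd G (Fb.image φ) = 0 := by
      rw [sgnBd, if_neg (fun h => hG h.1)]
    rw [hrhs, mul_zero]
    apply Finset.sum_eq_zero
    intro F' _
    by_cases himg' : F'.1.image φ = G
    · rw [if_pos himg']
      have : ¬ (F'.1 ⊆ Fb ∧ Fb.card = F'.1.card + 1) := by
        rintro ⟨hsub', _⟩
        exact hG (himg' ▸ Finset.image_subset_image hsub')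
      rw [sgnBd, if_neg this, zero_mul]
    · rw [if_neg himg']

end Aux

/-- spectral inclusion: for a strong `k`-fold covering
`φ : K → M` of weighted complexes with `w_K(F) = w_M(φ(F))`, every eigenvalue
of `L_i^up(M)` is an eigenvalue of `L_i^up(K)` with at least the same
multiplicity; i.e. the characteristic polynomial of `L_i^up(M)` divides that of
`L_i^up(K)`. -/
theorem spectral_inclusion_up_laplacian [Fintype V] [LinearOrder V]
    [Fintype W] [LinearOrder W]
    (K : Finset (Finset V)) (M : Finset (Finset W)) (φ : V → W)
    (hc : StrongCovering K M φ)
    (k : ℕ) (hk : 0 < k)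
    (hfold : ∀ G ∈ M, (K.filter fun F => F.card = G.card ∧ F.image φ = G).card = k)
    (wK : Finset V → ℝ) (wM : Finset W → ℝ)
    (hwM : ∀ G ∈ M, 0 < wM G)
    (hw : ∀ F ∈ K, wK F = wM (F.image φ))
    (i : ℕ) :
    (lapUp M wM i).charpoly ∣ (lapUp K wK i).charpoly := by
  classical
  have cardim : ∀ F ∈ K, (Finset.image φ F).card = F.card :=
    fun F hF => Finset.card_image_of_injOn (hc.injOn F hF)
  have memim : ∀ F : Finset V, F ∈ K → F.card = i + 1 →
      (F.image φ ∈ M ∧ (F.image φ).card = i + 1) :=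
    fun F hF hcF => ⟨hc.simplicial F hF, by rw [cardim F hF, hcF]⟩
  have memim2 : ∀ F : Finset V, F ∈ K → F.card = i + 2 →
      (F.image φ ∈ M ∧ (F.image φ).card = i + 2) :=
    fun F hF hcF => ⟨hc.simplicial F hF, by rw [cardim F hF, hcF]⟩
  set T : Matrix {F : Finset V // F ∈ K ∧ F.card = i + 1}
      {G : Finset W // G ∈ M ∧ G.card = i + 1} ℝ :=
    fun F G => if F.1.image φ = G.1 then sgnMap φ F.1 else 0 with hT
  apply charpoly_dvd_of_intertwine _ _ T
  · -- injectivity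
    rw [← LinearMap.ker_eq_bot, LinearMap.ker_eq_bot']
    intro x hx
    funext G
    obtain ⟨F, hFK, hFim⟩ := hc.surjFaces G.1 G.2.1
    have hFc : F.card = i + 1 := by
      have h := cardim F hFK; rw [hFim, G.2.2] at h; omega
    have hval : (Matrix.toLin' T) x ⟨F, hFK, hFc⟩ = sgnMap φ F * x G := by
      rw [Matrix.toLin'_apply]
      simp only [Matrix.mulVec, dotProduct]
      rw [Fintype.sum_eq_single G]
      · simp only [hT]
        rw [if_pos hFim]
      · intro G' hne
        have hne' : ¬ (F.image φ = G'.1) := fun h => hne (Subtype.ext (by rw [← h, hFim]))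
        simp only [hT]
        rw [if_neg hne', zero_mul]
    rw [hx] at hval
    have h0 : sgnMap φ F * x G = 0 := by rw [← hval]; rfl
    have := (mul_eq_zero.mp h0).resolve_left (sgnMap_ne_zero φ F)
    simpa using this
  · -- intertwining
    ext F G
    rw [Matrix.mul_apply, Matrix.mul_apply]
    have expand : ∀ F' : {F : Finset V // F ∈ K ∧ F.card = i + 1},
        lapUp K wK i F F' * T F' G
          = ∑ Fb : {B : Finset V // B ∈ K ∧ B.card = i + 2},
            (wK F.1)⁻¹ * ((wK Fb.1 * sgnBd F.1 Fb.1) *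
              (if F'.1.image φ = G.1 then sgnBd F'.1 Fb.1 * sgnMap φ F'.1 else 0)) := by
      intro F'
      simp only [lapUp, hT]
      rw [mul_assoc, Finset.sum_mul, Finset.mul_sum]
      refine Finset.sum_congr rfl (fun Fb _ => ?_)
      by_cases hcase : F'.1.image φ = G.1
      · rw [if_pos hcase, if_pos hcase]; ring
      · rw [if_neg hcase, if_neg hcase]; ring
    calc ∑ F' : {F : Finset V // F ∈ K ∧ F.card = i + 1},
          lapUp K wK i F F' * T F' G
        = ∑ F' : {F : Finset V // F ∈ K ∧ F.card = i + 1},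
            ∑ Fb : {B : Finset V // B ∈ K ∧ B.card = i + 2},
            (wK F.1)⁻¹ * ((wK Fb.1 * sgnBd F.1 Fb.1) *
              (if F'.1.image φ = G.1 then sgnBd F'.1 Fb.1 * sgnMap φ F'.1 else 0)) :=
          Finset.sum_congr rfl (fun F' _ => expand F')
      _ = ∑ Fb : {B : Finset V // B ∈ K ∧ B.card = i + 2},
            ∑ F' : {F : Finset V // F ∈ K ∧ F.card = i + 1},
            (wK F.1)⁻¹ * ((wK Fb.1 * sgnBd F.1 Fb.1) *
              (if F'.1.image φ = G.1 then sgnBd F'.1 Fb.1 * sgnMap φ F'.1 else 0)) :=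
          Finset.sum_comm
      _ = ∑ Fb : {B : Finset V // B ∈ K ∧ B.card = i + 2},
            (wK F.1)⁻¹ * ((wK Fb.1 * sgnBd F.1 Fb.1) *
              (sgnMap φ Fb.1 * sgnBd G.1 (Fb.1.image φ))) := by
          refine Finset.sum_congr rfl (fun Fb _ => ?_)
          rw [← Finset.mul_sum, ← Finset.mul_sum,
            inner_sum_cov hc i Fb.1 Fb.2.1 Fb.2.2 G.1 G.2.2]
      _ = ∑ Fb ∈ Finset.univ.filter
            (fun Fb : {B : Finset V // B ∈ K ∧ B.card = i + 2} => F.1 ⊆ Fb.1),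
            (wK F.1)⁻¹ * ((wK Fb.1 * sgnBd F.1 Fb.1) *
              (sgnMap φ Fb.1 * sgnBd G.1 (Fb.1.image φ))) := by
          refine (Finset.sum_filter_of_ne (fun Fb _ hne => ?_)).symm
          by_contra hsub
          have h0 : sgnBd F.1 Fb.1 = 0 := by rw [sgnBd, if_neg (fun h => hsub h.1)]
          rw [h0] at hne
          simp at hne
      _ = ∑ Gb ∈ Finset.univ.filter
            (fun Gb : {B : Finset W // B ∈ M ∧ B.card = i + 2} => F.1.image φ ⊆ Gb.1),
            sgnMap φ F.1 * ((wM (F.1.image φ))⁻¹ *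
              (wM Gb.1 * (sgnBd (F.1.image φ) Gb.1 * sgnBd G.1 Gb.1))) := by
          refine Finset.sum_bij (fun Fb _ =>
            ⟨Fb.1.image φ, memim2 Fb.1 Fb.2.1 Fb.2.2⟩) ?_ ?_ ?_ ?_
          · intro Fb hFb
            simp only [Finset.mem_filter, Finset.mem_univ, true_and] at hFb ⊢
            exact Finset.image_subset_image hFb
          · intro Fb1 h1 Fb2 h2 heq
            simp only [Finset.mem_filter, Finset.mem_univ, true_and] at h1 h2
            have himgeq : Fb1.1.image φ = Fb2.1.image φ := congrArg Subtype.val heq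
            by_contra hne
            have hne' : Fb1.1 ≠ Fb2.1 := fun h => hne (Subtype.ext h)
            have hdisj := hc.disjointFibers Fb1.1 Fb1.2.1 Fb2.1 Fb2.2.1 himgeq hne'
            have hFne : F.1.Nonempty := Finset.card_pos.mp (by rw [F.2.2]; omega)
            obtain ⟨u, hu⟩ := hFne
            exact (Finset.disjoint_left.mp hdisj (h1 hu)) (h2 hu)
          · intro Gb hGb
            simp only [Finset.mem_filter, Finset.mem_univ, true_and] at hGb
            obtain ⟨Fb, hFbK, hFsub, hFbcard, hFbimg⟩ := hc.strong (F.1.image φ)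
              (hc.simplicial F.1 F.2.1) Gb.1 Gb.2.1 hGb
              (by rw [Gb.2.2, cardim F.1 F.2.1, F.2.2]) F.1 F.2.1 rfl
            exact ⟨⟨Fb, hFbK, by rw [hFbcard, F.2.2]⟩,
              by simpa [Finset.mem_filter] using hFsub, Subtype.ext hFbimg⟩
          · intro Fb hFb
            simp only [Finset.mem_filter, Finset.mem_univ, true_and] at hFb
            have hcards : Fb.1.card = F.1.card + 1 := by rw [Fb.2.2, F.2.2]
            have hs := sgnBd_image φ F.1 Fb.1 hFb hcards (hc.injOn Fb.1 Fb.2.1)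
            rw [hw F.1 F.2.1, hw Fb.1 Fb.2.1, hs]
            have h2 := sgnMap_mul_self φ F.1
            linear_combination (-((wM (F.1.image φ))⁻¹ * wM (Fb.1.image φ) *
              sgnBd F.1 Fb.1 * sgnMap φ Fb.1 * sgnBd G.1 (Fb.1.image φ))) * h2
      _ = ∑ Gb : {B : Finset W // B ∈ M ∧ B.card = i + 2},
            sgnMap φ F.1 * ((wM (F.1.image φ))⁻¹ *
              (wM Gb.1 * (sgnBd (F.1.image φ) Gb.1 * sgnBd G.1 Gb.1))) := by
          refine Finset.sum_filter_of_ne (fun Gb _ hne => ?_)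
          by_contra hsub
          have h0 : sgnBd (F.1.image φ) Gb.1 = 0 := by
            rw [sgnBd, if_neg (fun h => hsub h.1)]
          rw [h0] at hne
          simp at hne
      _ = ∑ G' : {G : Finset W // G ∈ M ∧ G.card = i + 1}, T F G' * lapUp M wM i G' G := by
          have hsingle : ∑ G' : {G : Finset W // G ∈ M ∧ G.card = i + 1},
              T F G' * lapUp M wM i G' G
              = T F ⟨F.1.image φ, memim F.1 F.2.1 F.2.2⟩ *
                lapUp M wM i ⟨F.1.image φ, memim F.1 F.2.1 F.2.2⟩ G := by
            refine Fintype.sum_eq_single _ (fun G' hne => ?_)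
            have hne' : ¬ (F.1.image φ = G'.1) := fun h => hne (Subtype.ext h.symm)
            simp only [hT]
            rw [if_neg hne', zero_mul]
          rw [hsingle]
          simp only [hT, lapUp, if_true]
          rw [Finset.mul_sum, Finset.mul_sum]
          refine Finset.sum_congr rfl (fun Gb _ => ?_)
          ring
end
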